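/- arXiv:1707.01601 — 2 statements merged into one kernel-verified Lean document; each statement's English description precedes it below -/
import Mathlib

section
/- Let G be an infinite connected simple graph of bounded degree with minimal degree at least 2, and let f be a sink-free, source-free orientation of its edges. Then the map e ↦ f(e), viewed as a map from the line graph G_E to the symmetric oriented line graph G_{→E}, satisfies d_{G_E}(e,e') ≤ d_{G_{→E}}(f(e),f(e')) ≤ 2·d_{G_E}(e,e') for all edges e, e' of G. -/
/-- The symmetric oriented line graph of `G`: its vertices are the directed edges of
`G` (pairs `(a₁,a₂)` with `a₁ ~ a₂`); directed edges `a` and `b` are adjacent iff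
either `a₊ = b₋` and (`deg a₊ = 1` or `a₋ ≠ b₊`), or `a₋ = b₊` and (`deg b₊ = 1` or
`b₋ ≠ a₊`). -/
def symOrLineGraph {V : Type*} (G : SimpleGraph V) [G.LocallyFinite] :
    SimpleGraph (V × V) :=
  SimpleGraph.fromRel (fun a b =>
    G.Adj a.1 a.2 ∧ G.Adj b.1 b.2 ∧
      ((a.2 = b.1 ∧ (G.degree a.2 = 1 ∨ a.1 ≠ b.2)) ∨
       (a.1 = b.2 ∧ (G.degree b.2 = 1 ∨ b.1 ≠ a.2))))

/-- A single adjacency in the symmetric oriented line graph projects to an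
adjacency in the line graph (under minimal degree 2). -/
private lemma proj_adj {V : Type*} (G : SimpleGraph V) [G.LocallyFinite]
    (hdeg : ∀ v : V, 2 ≤ G.degree v) {a b : V × V}
    (h : (symOrLineGraph G).Adj a b) (ea eb : G.edgeSet)
    (ha : Sym2.mk a.1 a.2 = (ea : Sym2 V)) (hb : Sym2.mk b.1 b.2 = (eb : Sym2 V)) :
    G.lineGraph.Adj ea eb := by
  rw [symOrLineGraph, SimpleGraph.fromRel_adj] at h
  obtain ⟨hne, hr⟩ := h
  rw [SimpleGraph.lineGraph_adj_iff_exists]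
  constructor
  · intro hcontra
    have hSym : Sym2.mk a.1 a.2 = Sym2.mk b.1 b.2 := by
      rw [ha, hb, hcontra]
    have : a = (a.1, a.2) := rfl
    have hab : a.1 = b.1 ∧ a.2 = b.2 ∨ a.1 = b.2 ∧ a.2 = b.1 := by
      have := hSym
      rw [show Sym2.mk a.1 a.2 = s(a.1, a.2) from rfl, show Sym2.mk b.1 b.2 = s(b.1, b.2) from rfl,
        Sym2.eq_iff] at this
      exact this
    rcases hab with ⟨h1, h2⟩ | ⟨h1, h2⟩
    · exact hne (Prod.ext h1 h2)
    · have d1 := hdeg a.2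
      have d2 := hdeg b.2
      rcases hr with ⟨_, _, ⟨_, hc⟩ | ⟨_, hc⟩⟩ | ⟨_, _, ⟨_, hc⟩ | ⟨_, hc⟩⟩
      · rcases hc with hc | hc
        · omega
        · exact hc h1
      · rcases hc with hc | hc
        · omega
        · exact hc h2.symm
      · rcases hc with hc | hc
        · omega
        · exact hc h2.symm
      · rcases hc with hc | hc
        · omega
        · exact hc h1
  · rcases hr with ⟨_, _, ⟨hv, _⟩ | ⟨hv, _⟩⟩ | ⟨_, _, ⟨hv, _⟩ | ⟨hv, _⟩⟩
    · exact ⟨a.2, by rw [← ha]; exact Sym2.mem_mk_right _ _,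
        by rw [← hb, hv]; exact Sym2.mem_mk_left _ _⟩
    · exact ⟨a.1, by rw [← ha]; exact Sym2.mem_mk_left _ _,
        by rw [← hb, hv]; exact Sym2.mem_mk_right _ _⟩
    · exact ⟨b.2, by rw [← ha, hv]; exact Sym2.mem_mk_left _ _,
        by rw [← hb]; exact Sym2.mem_mk_right _ _⟩
    · exact ⟨b.1, by rw [← ha, hv]; exact Sym2.mem_mk_right _ _,
        by rw [← hb]; exact Sym2.mem_mk_left _ _⟩

/-- Every walk in the symmetric oriented line graph projects to a walk of the same
length in the line graph. -/
private lemma proj_walk {V : Type*} (G : SimpleGraph V) [G.LocallyFinite]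
    (hdeg : ∀ v : V, 2 ≤ G.degree v) :
    ∀ {a b : V × V} (p : (symOrLineGraph G).Walk a b) (ea eb : G.edgeSet),
      Sym2.mk a.1 a.2 = (ea : Sym2 V) → Sym2.mk b.1 b.2 = (eb : Sym2 V) →
      ∃ q : G.lineGraph.Walk ea eb, q.length = p.length := by
  intro a b p
  induction p with
  | nil =>
    intro ea eb ha hb
    have : ea = eb := Subtype.ext (ha.symm.trans hb)
    subst this
    exact ⟨SimpleGraph.Walk.nil, rfl⟩
  | @cons a c b h p ih =>
    intro ea eb ha hb
    have hc : Sym2.mk c.1 c.2 ∈ G.edgeSet := by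
      rw [symOrLineGraph, SimpleGraph.fromRel_adj] at h
      rcases h.2 with ⟨_, h2, _⟩ | ⟨h2, _, _⟩ <;>
        exact (SimpleGraph.mem_edgeSet G).mpr h2
    obtain ⟨q, hq⟩ := ih ⟨Sym2.mk c.1 c.2, hc⟩ eb rfl hb
    exact ⟨SimpleGraph.Walk.cons (proj_adj G hdeg h ea ⟨Sym2.mk c.1 c.2, hc⟩ ha rfl) q,
      by simp [hq]⟩

section Lift

variable {V : Type*} (G : SimpleGraph V) [G.LocallyFinite]
  (f : G.edgeSet → V × V)
  (hor : ∀ e : G.edgeSet, Sym2.mk (f e).1 (f e).2 = (e : Sym2 V))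

include hor in
private lemma hadj_of_or (e : G.edgeSet) : G.Adj (f e).1 (f e).2 := by
  have := e.2
  rw [← hor e] at this
  exact (SimpleGraph.mem_edgeSet G).mp this

include hor in
/-- `f e₁` cannot be the reverse of `f e₂`. -/
private lemma no_reverse (e₁ e₂ : G.edgeSet)
    (h1 : (f e₁).1 = (f e₂).2) (h2 : (f e₁).2 = (f e₂).1) : False := by
  have hSym : Sym2.mk (f e₁).1 (f e₁).2 = Sym2.mk (f e₂).1 (f e₂).2 := by
    rw [show Sym2.mk (f e₁).1 (f e₁).2 = s((f e₁).1, (f e₁).2) from rfl,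
      show Sym2.mk (f e₂).1 (f e₂).2 = s((f e₂).1, (f e₂).2) from rfl, h1, h2, Sym2.eq_swap]
  have he : e₁ = e₂ := Subtype.ext ((hor e₁).symm.trans (hSym.trans (hor e₂)))
  subst he
  exact (hadj_of_or G f hor e₁).ne (h2.symm ▸ h1 ▸ rfl)

include hor in
/-- If the head of `f e₁` is the tail of `f e₂`, they are adjacent in the
symmetric oriented line graph. -/
private lemma adj_of_head_tail (e₁ e₂ : G.edgeSet)
    (h : (f e₁).2 = (f e₂).1) : (symOrLineGraph G).Adj (f e₁) (f e₂) := by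
  rw [symOrLineGraph, SimpleGraph.fromRel_adj]
  refine ⟨?_, Or.inl ⟨hadj_of_or G f hor e₁, hadj_of_or G f hor e₂,
    Or.inl ⟨h, Or.inr fun hc => no_reverse G f hor e₁ e₂ hc h⟩⟩⟩
  intro hc
  exact (hadj_of_or G f hor e₁).ne' (by rw [← hc] at h; exact h)

include hor in
/-- One step in the line graph can be simulated by at most two steps in the
symmetric oriented line graph. -/
private lemma lift_step
    (htail : ∀ v : V, ∃ e : G.edgeSet, (f e).1 = v)
    (hhead : ∀ v : V, ∃ e : G.edgeSet, (f e).2 = v)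
    (e e' : G.edgeSet) (h : G.lineGraph.Adj e e') :
    ∃ q : (symOrLineGraph G).Walk (f e) (f e'), q.length ≤ 2 := by
  rw [SimpleGraph.lineGraph_adj_iff_exists] at h
  obtain ⟨-, v, hv1, hv2⟩ := h
  rw [← hor e] at hv1
  rw [← hor e'] at hv2
  rw [show Sym2.mk (f e).1 (f e).2 = s((f e).1, (f e).2) from rfl, Sym2.mem_iff] at hv1
  rw [show Sym2.mk (f e').1 (f e').2 = s((f e').1, (f e').2) from rfl, Sym2.mem_iff] at hv2
  rcases hv1 with hv1 | hv1 <;> rcases hv2 with hv2 | hv2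
  · -- v = (f e).1 = (f e').1 : both tails at v; use an edge with head v
    obtain ⟨d, hd⟩ := hhead v
    have h1 : (symOrLineGraph G).Adj (f e) (f d) :=
      (adj_of_head_tail G f hor d e (by rw [hd, hv1])).symm
    have h2 : (symOrLineGraph G).Adj (f d) (f e') :=
      adj_of_head_tail G f hor d e' (by rw [hd, hv2])
    exact ⟨SimpleGraph.Walk.cons h1 (SimpleGraph.Walk.cons h2 SimpleGraph.Walk.nil),
      by simp⟩
  · -- v = (f e).1 = (f e').2
    exact ⟨(adj_of_head_tail G f hor e' e (by rw [← hv2, ← hv1])).symm.toWalk, by simp⟩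
  · -- v = (f e).2 = (f e').1
    exact ⟨(adj_of_head_tail G f hor e e' (by rw [← hv1, ← hv2])).toWalk, by simp⟩
  · -- both heads at v; use an edge with tail v
    obtain ⟨c, hc⟩ := htail v
    have h1 : (symOrLineGraph G).Adj (f e) (f c) :=
      adj_of_head_tail G f hor e c (by rw [hc, hv1])
    have h2 : (symOrLineGraph G).Adj (f c) (f e') :=
      (adj_of_head_tail G f hor e' c (by rw [hc, hv2])).symm
    exact ⟨SimpleGraph.Walk.cons h1 (SimpleGraph.Walk.cons h2 SimpleGraph.Walk.nil),
      by simp⟩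

include hor in
private lemma lift_walk
    (htail : ∀ v : V, ∃ e : G.edgeSet, (f e).1 = v)
    (hhead : ∀ v : V, ∃ e : G.edgeSet, (f e).2 = v) :
    ∀ {e e' : G.edgeSet} (p : G.lineGraph.Walk e e'),
      ∃ q : (symOrLineGraph G).Walk (f e) (f e'), q.length ≤ 2 * p.length := by
  intro e e' p
  induction p with
  | nil => exact ⟨SimpleGraph.Walk.nil, by simp⟩
  | @cons e c e' h p ih =>
    obtain ⟨q1, hq1⟩ := lift_step G f hor htail hhead e c h
    obtain ⟨q2, hq2⟩ := ih
    refine ⟨q1.append q2, ?_⟩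
    rw [SimpleGraph.Walk.length_append, SimpleGraph.Walk.length_cons]
    omega

end Lift

/-- Given a sink-free, source-free orientation `f` of the edges of an infinite
connected bounded-degree graph of minimal degree at least 2, the map `e ↦ f(e)` from
the line graph `G_E` to the symmetric oriented line graph `G_{→E}` satisfies
`d_{G_E}(e,e') ≤ d_{G_{→E}}(f(e),f(e')) ≤ 2 d_{G_E}(e,e')`. -/
theorem stmt12 {V : Type*} [Infinite V] (G : SimpleGraph V) [G.LocallyFinite]
    (hconn : G.Connected) (hbdd : ∃ D : ℕ, ∀ v : V, G.degree v ≤ D)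
    (hdeg : ∀ v : V, 2 ≤ G.degree v)
    (f : G.edgeSet → V × V)
    (hor : ∀ e : G.edgeSet, Sym2.mk (f e).1 (f e).2 = (e : Sym2 V))
    (htail : ∀ v : V, ∃ e : G.edgeSet, (f e).1 = v)
    (hhead : ∀ v : V, ∃ e : G.edgeSet, (f e).2 = v)
    (e e' : G.edgeSet) :
    G.lineGraph.dist e e' ≤ (symOrLineGraph G).dist (f e) (f e') ∧
      (symOrLineGraph G).dist (f e) (f e') ≤ 2 * G.lineGraph.dist e e' := by
  by_cases hreach : G.lineGraph.Reachable e e'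
  · obtain ⟨p, hp⟩ := hreach.exists_walk_length_eq_dist
    obtain ⟨q, hq⟩ := lift_walk G f hor htail hhead p
    have hsreach : (symOrLineGraph G).Reachable (f e) (f e') := ⟨q⟩
    obtain ⟨r, hr⟩ := hsreach.exists_walk_length_eq_dist
    obtain ⟨s, hs⟩ := proj_walk G hdeg r e e' (hor e) (hor e')
    constructor
    · calc G.lineGraph.dist e e' ≤ s.length := SimpleGraph.dist_le s
        _ = r.length := hs
        _ = _ := hr
    · calc (symOrLineGraph G).dist (f e) (f e') ≤ q.length := SimpleGraph.dist_le q
        _ ≤ 2 * p.length := hq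
        _ = _ := by rw [hp]
  · have h1 : G.lineGraph.dist e e' = 0 :=
      SimpleGraph.dist_eq_zero_of_not_reachable hreach
    have h2 : (symOrLineGraph G).dist (f e) (f e') = 0 := by
      apply SimpleGraph.dist_eq_zero_of_not_reachable
      intro ⟨r⟩
      obtain ⟨s, -⟩ := proj_walk G hdeg r e e' (hor e) (hor e')
      exact hreach ⟨s⟩
    rw [h1, h2]
    exact ⟨le_refl _, le_refl _⟩
end

section
/- Let P be an irreducible Markov kernel on a countable state space, and let P̂ = ∑_{i=0}^m p_i P^i with ∑ p_i = 1 and p_0 > 0. Then for every state x, ∑_{n≥0} P̂^n(x,x) ≤ (1-p_0)^{-1} ∑_{n≥0} P^n(x,x). -/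
open Classical ENNReal

/-- Coefficients of `(∑ i ≤ m, p i * X^i)^n`. -/
noncomputable def stmtC (m : ℕ) (p : ℕ → ℝ≥0∞) : ℕ → ℕ → ℝ≥0∞
  | 0, k => if k = 0 then 1 else 0
  | (n+1), k => ∑ i ∈ Finset.range (m+1),
      if i ≤ k then p i * stmtC m p n (k - i) else 0

open Classical ENNReal in
lemma stmt15_ppow_add {V : Type*} (P : V → V → ℝ≥0∞) (Ppow : ℕ → V → V → ℝ≥0∞)
    (hPpow0 : ∀ x y : V, Ppow 0 x y = if x = y then 1 else 0)
    (hPpowS : ∀ (n : ℕ) (x y : V), Ppow (n + 1) x y = ∑' z : V, Ppow n x z * P z y) :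
    ∀ (b a : ℕ) (x y : V), Ppow (a + b) x y = ∑' z : V, Ppow a x z * Ppow b z y := by
  intro b
  induction b with
  | zero =>
    intro a x y
    have h : ∀ z : V, Ppow a x z * Ppow 0 z y = if z = y then Ppow a x y else 0 := by
      intro z
      rw [hPpow0]
      by_cases hz : z = y <;> simp [hz]
    simp only [Nat.add_zero, h, tsum_ite_eq]
  | succ b ih =>
    intro a x y
    have hab : a + (b + 1) = (a + b) + 1 := by ring
    rw [hab, hPpowS]
    calc ∑' z, Ppow (a+b) x z * P z y
        = ∑' z, (∑' w, Ppow a x w * Ppow b w z) * P z y := by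
          simp_rw [ih]
      _ = ∑' z, ∑' w, Ppow a x w * Ppow b w z * P z y := by
          congr 1; funext z; rw [ENNReal.tsum_mul_right]
      _ = ∑' w, ∑' z, Ppow a x w * Ppow b w z * P z y := ENNReal.tsum_comm
      _ = ∑' w, Ppow a x w * ∑' z, Ppow b w z * P z y := by
          congr 1; funext w; simp_rw [mul_assoc]; rw [ENNReal.tsum_mul_left]
      _ = ∑' w, Ppow a x w * Ppow (b+1) w y := by
          simp_rw [hPpowS]

open Classical ENNReal in
lemma stmt15_expand {V : Type*} (P : V → V → ℝ≥0∞) (Ppow : ℕ → V → V → ℝ≥0∞)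
    (hPpow0 : ∀ x y : V, Ppow 0 x y = if x = y then 1 else 0)
    (hPpowS : ∀ (n : ℕ) (x y : V), Ppow (n + 1) x y = ∑' z : V, Ppow n x z * P z y)
    (m : ℕ) (p : ℕ → ℝ≥0∞)
    (Q : V → V → ℝ≥0∞)
    (hQ : ∀ x y : V, Q x y = ∑ i ∈ Finset.range (m + 1), p i * Ppow i x y)
    (Qpow : ℕ → V → V → ℝ≥0∞)
    (hQpow0 : ∀ x y : V, Qpow 0 x y = if x = y then 1 else 0)
    (hQpowS : ∀ (n : ℕ) (x y : V), Qpow (n + 1) x y = ∑' z : V, Qpow n x z * Q z y) :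
    ∀ (n : ℕ) (x y : V), Qpow n x y = ∑' k : ℕ, stmtC m p n k * Ppow k x y := by
  intro n
  induction n with
  | zero =>
    intro x y
    have h : ∀ k : ℕ, stmtC m p 0 k * Ppow k x y
        = if k = 0 then Ppow 0 x y else 0 := by
      intro k
      simp only [stmtC]
      by_cases hk : k = 0 <;> simp [hk]
    rw [hQpow0, ← hPpow0]
    simp only [h, tsum_ite_eq]
  | succ n ih =>
    intro x y
    rw [hQpowS]
    have step1 : ∑' z, Qpow n x z * Q z y
        = ∑ i ∈ Finset.range (m+1), ∑' k : ℕ,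
            stmtC m p n k * p i * Ppow (k + i) x y := by
      calc ∑' z, Qpow n x z * Q z y
          = ∑' z, ∑ i ∈ Finset.range (m+1), ∑' k : ℕ,
              stmtC m p n k * p i * (Ppow k x z * Ppow i z y) := by
            congr 1; funext z
            rw [ih, hQ, Finset.mul_sum]
            refine Finset.sum_congr rfl fun i _ => ?_
            rw [← ENNReal.tsum_mul_right]
            congr 1; funext k; ring
        _ = ∑ i ∈ Finset.range (m+1), ∑' z, ∑' k : ℕ,
              stmtC m p n k * p i * (Ppow k x z * Ppow i z y) :=
            Summable.tsum_finsetSum (fun i _ => ENNReal.summable)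
        _ = ∑ i ∈ Finset.range (m+1), ∑' k : ℕ, ∑' z,
              stmtC m p n k * p i * (Ppow k x z * Ppow i z y) := by
            refine Finset.sum_congr rfl fun i _ => ?_
            exact ENNReal.tsum_comm
        _ = ∑ i ∈ Finset.range (m+1), ∑' k : ℕ,
              stmtC m p n k * p i * Ppow (k + i) x y := by
            refine Finset.sum_congr rfl fun i _ => ?_
            congr 1; funext k
            rw [ENNReal.tsum_mul_left, stmt15_ppow_add P Ppow hPpow0 hPpowS i k x y]
    rw [step1]
    have step2 : ∑' k : ℕ, stmtC m p (n+1) k * Ppow k x y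
        = ∑ i ∈ Finset.range (m+1), ∑' K : ℕ,
            (if i ≤ K then p i * stmtC m p n (K - i) * Ppow K x y else 0) := by
      calc ∑' K : ℕ, stmtC m p (n+1) K * Ppow K x y
          = ∑' K : ℕ, ∑ i ∈ Finset.range (m+1),
              (if i ≤ K then p i * stmtC m p n (K - i) * Ppow K x y else 0) := by
            congr 1; funext K
            simp only [stmtC, Finset.sum_mul]
            refine Finset.sum_congr rfl fun i _ => ?_
            by_cases hik : i ≤ K <;> simp [hik]
        _ = _ := Summable.tsum_finsetSum (fun i _ => ENNReal.summable)
    rw [step2]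
    refine Finset.sum_congr rfl fun i _ => ?_
    set f : ℕ → ℝ≥0∞ := fun K =>
      if i ≤ K then p i * stmtC m p n (K - i) * Ppow K x y else 0 with hf
    have hinj : Function.Injective (fun k : ℕ => k + i) := add_left_injective i
    have hsupp : Function.support f ⊆ Set.range (fun k : ℕ => k + i) := by
      intro K hK
      by_contra hKr
      apply hK
      have hiK : ¬ i ≤ K := by
        intro hle
        exact hKr ⟨K - i, by simp [Nat.sub_add_cancel hle]⟩
      simp [hf, hiK]
    have := hinj.tsum_eq hsupp
    rw [← this]
    congr 1
    funext k
    have hik : i ≤ k + i := Nat.le_add_left i k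
    simp only [hf, hik, if_true, Nat.add_sub_cancel]
    ring

open Classical ENNReal in
lemma stmt15_bound (m : ℕ) (p : ℕ → ℝ≥0∞)
    (hsum : ∑ i ∈ Finset.range (m + 1), p i = 1) (hp1 : p 0 < 1) :
    ∀ (N k : ℕ), ∑ n ∈ Finset.range N, stmtC m p n k ≤ (1 - p 0)⁻¹ := by
  have hne : (1 : ℝ≥0∞) - p 0 ≠ 0 := by
    simp only [ne_eq, tsub_eq_zero_iff_le, not_le]; exact hp1
  have hnt : (1 : ℝ≥0∞) - p 0 ≠ ⊤ :=
    (lt_of_le_of_lt tsub_le_self ENNReal.one_lt_top).ne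
  have key : 1 + p 0 * (1 - p 0)⁻¹ = (1 - p 0)⁻¹ := by
    have h1 : (1 - p 0) + p 0 = 1 := tsub_add_cancel_of_le hp1.le
    calc 1 + p 0 * (1 - p 0)⁻¹
        = (1 - p 0) * (1 - p 0)⁻¹ + p 0 * (1 - p 0)⁻¹ := by
          rw [ENNReal.mul_inv_cancel hne hnt]
      _ = ((1 - p 0) + p 0) * (1 - p 0)⁻¹ := by rw [add_mul]
      _ = (1 - p 0)⁻¹ := by rw [h1, one_mul]
  intro N
  induction N with
  | zero => intro k; simp
  | succ N ih =>
    intro k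
    rw [Finset.sum_range_succ']
    have hrec : ∑ n ∈ Finset.range N, stmtC m p (n+1) k
        = ∑ i ∈ Finset.range (m+1),
            (if i ≤ k then p i * ∑ n ∈ Finset.range N, stmtC m p n (k - i) else 0) := by
      have e : ∀ n, stmtC m p (n+1) k = ∑ i ∈ Finset.range (m+1),
          (if i ≤ k then p i * stmtC m p n (k - i) else 0) := fun n => rfl
      rw [Finset.sum_congr rfl (fun n _ => e n), Finset.sum_comm]
      refine Finset.sum_congr rfl fun i _ => ?_
      by_cases hik : i ≤ k
      · simp only [hik, if_true, Finset.mul_sum]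
      · simp [hik]
    rw [hrec]
    by_cases hk : k = 0
    · subst hk
      have h0 : ∑ i ∈ Finset.range (m+1),
          (if i ≤ 0 then p i * ∑ n ∈ Finset.range N, stmtC m p n (0 - i) else 0)
          = p 0 * ∑ n ∈ Finset.range N, stmtC m p n 0 := by
        rw [Finset.sum_eq_single 0]
        · simp
        · intro i _ hi
          simp [Nat.not_le.mpr (Nat.pos_of_ne_zero hi)]
        · intro h; exact absurd (Finset.mem_range.mpr (Nat.succ_pos m)) h
      rw [h0]
      have h1 : stmtC m p 0 0 = 1 := by simp [stmtC]
      rw [h1]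
      calc p 0 * ∑ n ∈ Finset.range N, stmtC m p n 0 + 1
          ≤ p 0 * (1 - p 0)⁻¹ + 1 := by gcongr; exact ih 0
        _ = (1 - p 0)⁻¹ := by rw [add_comm]; exact key
    · have h0 : stmtC m p 0 k = 0 := by simp [stmtC, hk]
      rw [h0, add_zero]
      calc ∑ i ∈ Finset.range (m+1),
            (if i ≤ k then p i * ∑ n ∈ Finset.range N, stmtC m p n (k - i) else 0)
          ≤ ∑ i ∈ Finset.range (m+1), p i * (1 - p 0)⁻¹ := by
            refine Finset.sum_le_sum fun i _ => ?_
            by_cases hik : i ≤ k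
            · simp only [hik, if_true]
              gcongr
              exact ih _
            · simp [hik]
        _ = (1 - p 0)⁻¹ := by rw [← Finset.sum_mul, hsum, one_mul]

open Classical ENNReal in
/-- Let `P` be an irreducible Markov kernel and `Q = ∑_{i=0}^m p_i P^i` with
`∑ p_i = 1` and `p_0 > 0`.  Then `∑ₙ Qⁿ(x,x) ≤ (1 - p_0)⁻¹ ∑ₙ Pⁿ(x,x)`. -/
theorem stmt15 {V : Type*} [Countable V] (P : V → V → ℝ≥0∞)
    (hMarkov : ∀ x : V, ∑' y : V, P x y = 1)
    (Ppow : ℕ → V → V → ℝ≥0∞)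
    (hPpow0 : ∀ x y : V, Ppow 0 x y = if x = y then 1 else 0)
    (hPpowS : ∀ (n : ℕ) (x y : V), Ppow (n + 1) x y = ∑' z : V, Ppow n x z * P z y)
    (hirr : ∀ x y : V, ∃ n : ℕ, 0 < Ppow n x y)
    (m : ℕ) (p : ℕ → ℝ≥0∞)
    (hsum : ∑ i ∈ Finset.range (m + 1), p i = 1)
    (hp0 : 0 < p 0)
    (Q : V → V → ℝ≥0∞)
    (hQ : ∀ x y : V, Q x y = ∑ i ∈ Finset.range (m + 1), p i * Ppow i x y)
    (Qpow : ℕ → V → V → ℝ≥0∞)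
    (hQpow0 : ∀ x y : V, Qpow 0 x y = if x = y then 1 else 0)
    (hQpowS : ∀ (n : ℕ) (x y : V), Qpow (n + 1) x y = ∑' z : V, Qpow n x z * Q z y)
    (x : V) :
    (∑' n : ℕ, Qpow n x x) ≤ (1 - p 0)⁻¹ * ∑' n : ℕ, Ppow n x x := by
  have hp0le : p 0 ≤ 1 := by
    rw [← hsum]
    exact Finset.single_le_sum (fun i _ => zero_le (a := p i))
      (Finset.mem_range.mpr (Nat.succ_pos m))
  have hP0 : Ppow 0 x x = 1 := by simp [hPpow0]
  by_cases hp1 : p 0 = 1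
  · have hB : ((1 : ℝ≥0∞) - p 0)⁻¹ = ⊤ := by simp [hp1]
    rw [hB]
    have hpos : (∑' n : ℕ, Ppow n x x) ≠ 0 := by
      intro h
      have hle : Ppow 0 x x ≤ ∑' n : ℕ, Ppow n x x :=
        ENNReal.le_tsum 0
      rw [h, hP0] at hle
      exact absurd hle (by simp)
    rw [ENNReal.top_mul hpos]
    exact le_top
  · have hp1' : p 0 < 1 := lt_of_le_of_ne hp0le hp1
    have hexp := stmt15_expand P Ppow hPpow0 hPpowS m p Q hQ Qpow hQpow0 hQpowS
    have hbd : ∀ k : ℕ, (∑' n : ℕ, stmtC m p n k) ≤ (1 - p 0)⁻¹ := fun k =>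
      ENNReal.tsum_le_of_sum_range_le (fun N => stmt15_bound m p hsum hp1' N k)
    calc (∑' n : ℕ, Qpow n x x)
        = ∑' n : ℕ, ∑' k : ℕ, stmtC m p n k * Ppow k x x := by
          congr 1; funext n; exact hexp n x x
      _ = ∑' k : ℕ, ∑' n : ℕ, stmtC m p n k * Ppow k x x := ENNReal.tsum_comm
      _ = ∑' k : ℕ, (∑' n : ℕ, stmtC m p n k) * Ppow k x x := by
          congr 1; funext k; rw [ENNReal.tsum_mul_right]
      _ ≤ ∑' k : ℕ, (1 - p 0)⁻¹ * Ppow k x x := by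
          gcongr with k
          exact hbd k
      _ = (1 - p 0)⁻¹ * ∑' k : ℕ, Ppow k x x := ENNReal.tsum_mul_left
end
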